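/- Let q, N be positive integers and let (a_k), (a'_k) be sequences of complex numbers whose generating functions are of the form (polynomial of degree < q(N+1))/(1-z^q)^{N+1}. If limsup_{t→∞} |{0 ≤ k ≤ t : a_k ≠ a'_k}|/t < 1/q, then a_k = a'_k for all k. -/

import Mathlib

open Finset Filter fwdDiff

lemma diff_zero_of_init' : ∀ (n : ℕ) (f : ℕ → ℂ), (fwdDiff (1:ℕ))^[n] f = 0 →
    (∀ i < n, f i = 0) → ∀ m, f m = 0 := by
  intro n
  induction n with
  | zero => intro f hd _ m; simpa using congrFun hd m
  | succ n IH =>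
    intro f hd hi
    have hg : ∀ m, f (m + 1) = f m := by
      have h0 : (fwdDiff (1:ℕ))^[n] (fwdDiff (1:ℕ) f) = 0 := by
        rw [← Function.iterate_succ_apply]; exact hd
      have h1 : ∀ i < n, (fwdDiff (1:ℕ) f) i = 0 := by
        intro i hin
        simp only [fwdDiff, hi i (by omega), hi (i+1) (by omega), sub_zero]
      intro m
      have := IH _ h0 h1 m
      simp only [fwdDiff] at this
      exact sub_eq_zero.mp this
    intro m
    induction m with
    | zero => exact hi 0 (by omega)
    | succ m IHm => rw [hg m]; exact IHm

lemma poly_fwdDiff' : ∀ (n : ℕ) (P : Polynomial ℂ), P.degree < (n : ℕ) →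
    (fwdDiff (1:ℕ))^[n] (fun m : ℕ => P.eval (m : ℂ)) = 0 := by
  intro n
  induction n with
  | zero =>
    intro P hP
    have : P = 0 := by
      rw [← Polynomial.degree_eq_bot]
      exact Nat.WithBot.lt_zero_iff.mp (by simpa using hP)
    simp only [this, Polynomial.eval_zero]
    rfl
  | succ n IH =>
    intro P hP
    set Q : Polynomial ℂ := P.comp (Polynomial.X + 1) - P with hQdef
    have hev : ∀ m : ℕ, Q.eval (m : ℂ) = P.eval ((m : ℂ) + 1) - P.eval (m : ℂ) := by
      intro m; simp [hQdef, Polynomial.eval_comp]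
    have hQ : Q.degree < (n : ℕ) := by
      rcases eq_or_ne P 0 with rfl | hP0
      · simp [hQdef, Polynomial.zero_comp]
      rcases le_or_gt P.degree 0 with hd0 | hd0
      · have hPC := Polynomial.eq_C_of_degree_le_zero hd0
        have hQ0 : Q = 0 := by rw [hQdef, hPC]; simp
        rw [hQ0, Polynomial.degree_zero, Nat.cast_withBot]
        exact WithBot.bot_lt_coe n
      · have hnd : 0 < P.natDegree := by
          rwa [Polynomial.degree_eq_natDegree hP0, Nat.cast_pos] at hd0
        have hC1 : (Polynomial.X + 1 : Polynomial ℂ) = Polynomial.X + Polynomial.C 1 := by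
          rw [map_one]
        have hX1 : (Polynomial.X + 1 : Polynomial ℂ).natDegree = 1 := by
          rw [hC1, Polynomial.natDegree_X_add_C]
        have hlc : (P.comp (Polynomial.X + 1)).leadingCoeff = P.leadingCoeff := by
          rw [Polynomial.leadingCoeff_comp (by omega), hC1, Polynomial.leadingCoeff_X_add_C]
          simp
        have hcomp0 : P.comp (Polynomial.X + 1) ≠ 0 :=
          Polynomial.leadingCoeff_ne_zero.mp
            (by rw [hlc]; exact Polynomial.leadingCoeff_ne_zero.mpr hP0)
        have hdeq : (P.comp (Polynomial.X + 1)).degree = P.degree := by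
          rw [Polynomial.degree_eq_natDegree hcomp0, Polynomial.degree_eq_natDegree hP0,
            Polynomial.natDegree_comp, hX1, mul_one]
        have := Polynomial.degree_sub_lt hdeq hcomp0 hlc
        rw [hdeq] at this
        calc Q.degree < P.degree := this
          _ ≤ (n : ℕ) := by
            rw [Polynomial.degree_eq_natDegree hP0] at hP ⊢
            exact_mod_cast Nat.lt_succ_iff.mp (by exact_mod_cast hP)
    have hstep : fwdDiff (1:ℕ) (fun m : ℕ => P.eval (m : ℂ)) = fun m : ℕ => Q.eval (m : ℂ) := by
      funext m
      simp only [fwdDiff, hev m]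
      push_cast
      ring
    rw [Function.iterate_succ_apply, hstep]
    exact IH Q hQ

lemma eventually_ne_of_fwdDiff (N : ℕ) (c : ℕ → ℂ) (m0 : ℕ) (hm0 : c m0 ≠ 0)
    (hdiffc : (fwdDiff (1:ℕ))^[N+1] c = 0) :
    ∃ M : ℕ, ∀ m, M ≤ m → c m ≠ 0 := by
  classical
  have hInj : Set.InjOn (fun i : ℕ => (i : ℂ)) (Finset.range (N + 1)) :=
    fun x _ y _ h => Nat.cast_injective h
  set P : Polynomial ℂ := Lagrange.interpolate (Finset.range (N + 1)) (fun i : ℕ => (i : ℂ)) c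
    with hPdef
  have hPd : P.degree < ((N + 1 : ℕ) : WithBot ℕ) := by
    have := Lagrange.degree_interpolate_lt (r := c) hInj
    rwa [Finset.card_range] at this
  have hdiffe : (fwdDiff (1:ℕ))^[N+1] (fun m : ℕ => P.eval (m : ℂ)) = 0 :=
    poly_fwdDiff' (N + 1) P hPd
  have hce : ∀ m : ℕ, c m = P.eval (m : ℂ) := by
    have key : ∀ m : ℕ, (fun m : ℕ => c m - P.eval (m : ℂ)) m = 0 := by
      apply diff_zero_of_init' (N + 1)
      · have hsplit : (fun m : ℕ => c m - P.eval (m : ℂ))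
            = c + (-1 : ℂ) • (fun m : ℕ => P.eval (m : ℂ)) := by
          funext m; simp [sub_eq_add_neg]
        rw [hsplit, fwdDiff_iter_add, fwdDiff_iter_const_smul, hdiffc, hdiffe]
        simp
      · intro i hi
        have := Lagrange.eval_interpolate_at_node (r := c) hInj
          (Finset.mem_range.mpr hi)
        simp only [← hPdef] at this
        simp [this]
    intro m
    have := key m
    simpa [sub_eq_zero] using this
  have hP0 : P ≠ 0 := by
    intro h
    apply hm0
    rw [hce m0, h]
    simp
  have hZ : ((fun m : ℕ => (m : ℂ)) ⁻¹' {x | P.IsRoot x}).Finite :=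
    Set.Finite.preimage (Set.injOn_of_injective Nat.cast_injective)
      (Polynomial.finite_setOf_isRoot hP0)
  obtain ⟨M, hM⟩ := hZ.bddAbove
  refine ⟨M + 1, fun m hm hc => ?_⟩
  have : m ∈ (fun m : ℕ => (m : ℂ)) ⁻¹' {x | P.IsRoot x} := by
    simp only [Set.mem_preimage, Set.mem_setOf_eq, Polynomial.IsRoot]
    rw [← hce m, hc]
  have := hM this
  omega

lemma density_contra (q : ℕ) (hq : 0 < q) (a a' : ℕ → ℂ)
    (r Mc : ℕ) (hMc : ∀ m, Mc ≤ m → a (r + q * m) ≠ a' (r + q * m))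
    (hdens : Filter.limsup
        (fun t : ℕ => (({k | k ≤ t ∧ a k ≠ a' k}.ncard : ℝ)) / t) Filter.atTop
      < 1 / q) : False := by
  classical
  set f : ℕ → ℝ := fun t : ℕ => (({k | k ≤ t ∧ a k ≠ a' k}.ncard : ℝ)) / t with hfdef
  set C : ℕ := r + Mc * q with hCdef
  set g : ℕ → ℝ := fun t : ℕ => ((t : ℝ) - C) / q / t with hgdef
  have hq' : (0:ℝ) < q := by exact_mod_cast hq
  have hSt : ∀ t : ℕ, {k | k ≤ t ∧ a k ≠ a' k}
      = ↑((Finset.Iic t).filter fun k => a k ≠ a' k) := by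
    intro t; ext k; simp [Finset.mem_filter, and_comm]
  have htg : Filter.Tendsto g Filter.atTop (nhds (1 / q)) := by
    have h1 : Filter.Tendsto (fun t : ℕ => 1 / (q:ℝ) - ((C:ℝ) / q) * (1 / t))
        Filter.atTop (nhds (1 / q)) := by
      have := (tendsto_one_div_atTop_nhds_zero_nat.const_mul ((C:ℝ)/q))
      have h2 := (tendsto_const_nhds :
        Filter.Tendsto (fun _ : ℕ => 1/(q:ℝ)) Filter.atTop (nhds (1/(q:ℝ)))).sub this
      simpa using h2
    apply Filter.Tendsto.congr' _ h1
    filter_upwards [Filter.eventually_ge_atTop 1] with t ht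
    have ht0 : (t:ℝ) ≠ 0 := by positivity
    simp only [hgdef]
    field_simp [hgdef]
  have hle : g ≤ᶠ[Filter.atTop] f := by
    filter_upwards [Filter.eventually_ge_atTop (C + q + 1)] with t ht
    set L : ℕ := (t - r) / q with hLdef
    have hrt : r ≤ t := by omega
    have hL : q * L + (t - r) % q = t - r := Nat.div_add_mod _ _
    have hrem : (t - r) % q < q := Nat.mod_lt _ hq
    have hMcL : Mc ≤ L := by
      rw [hLdef, Nat.le_div_iff_mul_le hq]
      omega
    have hinj : Function.Injective (fun m : ℕ => r + q * m) :=
      fun x y h => by simp only at h; exact Nat.eq_of_mul_eq_mul_left hq (by omega)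
    have hTsub : (Finset.Icc Mc L).image (fun m => r + q * m)
        ⊆ (Finset.Iic t).filter fun k => a k ≠ a' k := by
      intro k hk
      obtain ⟨m, hm, rfl⟩ := Finset.mem_image.mp hk
      rw [Finset.mem_Icc] at hm
      have hqm : q * m ≤ q * L := Nat.mul_le_mul_left _ hm.2
      refine Finset.mem_filter.mpr ⟨Finset.mem_Iic.mpr (by omega), hMc m hm.1⟩
    have hcard : L + 1 - Mc ≤ ((Finset.Iic t).filter fun k => a k ≠ a' k).card := by
      have h1 := Finset.card_le_card hTsub
      rwa [Finset.card_image_of_injective _ hinj, Nat.card_Icc] at h1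
    have ht0 : (0:ℝ) < t := by
      have : (1:ℕ) ≤ t := by omega
      exact_mod_cast Nat.lt_of_lt_of_le Nat.zero_lt_one this
    show ((t : ℝ) - C) / q / t ≤ _
    rw [hfdef]
    simp only [hSt t, Set.ncard_coe_finset]
    have h1 : ((t:ℝ) - C) / q ≤ (((Finset.Iic t).filter fun k => a k ≠ a' k).card : ℝ) := by
      rw [div_le_iff₀ hq']
      have e3 : ((L:ℝ) + 1 - Mc) ≤ (((Finset.Iic t).filter fun k => a k ≠ a' k).card : ℝ) := by
        have : ((L + 1 - Mc : ℕ) : ℝ) = (L:ℝ) + 1 - Mc := by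
          have : Mc ≤ L + 1 := by omega
          push_cast [this]; ring
        rw [← this]
        exact_mod_cast hcard
      have e1 : (q:ℝ) * L + ((t - r) % q : ℕ) = (t:ℝ) - r := by
        have := congrArg (fun x : ℕ => (x : ℝ)) hL
        push_cast [Nat.cast_sub hrt] at this
        linarith
      have e2 : (((t - r) % q : ℕ) : ℝ) ≤ (q:ℝ) - 1 := by
        have : (t - r) % q + 1 ≤ q := hrem
        exact_mod_cast by push_cast; linarith [show (((t-r) % q : ℕ):ℝ) + 1 ≤ q from by exact_mod_cast this]
      have e4 := mul_le_mul_of_nonneg_right e3 (le_of_lt hq')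
      have hCr : (C:ℝ) = r + Mc * q := by rw [hCdef]; push_cast; ring
      nlinarith
    calc ((t : ℝ) - C) / q / t ≤ (((Finset.Iic t).filter fun k => a k ≠ a' k).card : ℝ) / t := by
          gcongr
      _ = _ := rfl
  have hbd : Filter.IsBoundedUnder (· ≤ ·) Filter.atTop f := by
    refine ⟨2, ?_⟩
    rw [Filter.eventually_map]
    filter_upwards [Filter.eventually_ge_atTop 1] with t ht
    have ht0 : (0:ℝ) < t := by exact_mod_cast Nat.lt_of_lt_of_le Nat.zero_lt_one ht
    have hc : ({k | k ≤ t ∧ a k ≠ a' k}.ncard : ℝ) ≤ (t:ℝ) + 1 := by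
      have h1 : ({k | k ≤ t ∧ a k ≠ a' k}.ncard) ≤ t + 1 := by
        rw [hSt t, Set.ncard_coe_finset]
        calc ((Finset.Iic t).filter fun k => a k ≠ a' k).card
            ≤ (Finset.Iic t).card := Finset.card_filter_le _ _
          _ = t + 1 := Nat.card_Iic t
      exact_mod_cast h1
    rw [hfdef]
    simp only
    rw [div_le_iff₀ ht0]
    have : (1:ℝ) ≤ t := by exact_mod_cast ht
    nlinarith
  have hkey : 1 / (q:ℝ) ≤ Filter.limsup f Filter.atTop := by
    rw [← htg.limsup_eq]
    exact Filter.limsup_le_limsup hle htg.isCoboundedUnder_le hbd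
  rw [hfdef] at hkey
  exact absurd hdens (not_lt.mpr hkey)

theorem stmt7 (q N : ℕ) (hq : 0 < q) (hN : 0 < N) (a a' : ℕ → ℂ)
    (p p' : Polynomial ℂ)
    (hdeg : p.degree < (q * (N + 1) : ℕ)) (hdeg' : p'.degree < (q * (N + 1) : ℕ))
    (hF : PowerSeries.mk a * (1 - PowerSeries.X ^ q) ^ (N + 1) = (p : PowerSeries ℂ))
    (hF' : PowerSeries.mk a' * (1 - PowerSeries.X ^ q) ^ (N + 1) = (p' : PowerSeries ℂ))
    (hdens : Filter.limsup
        (fun t : ℕ => (({k | k ≤ t ∧ a k ≠ a' k}.ncard : ℝ)) / t) Filter.atTop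
      < 1 / q) :
    ∀ k : ℕ, a k = a' k := by
  classical
  set b : ℕ → ℂ := fun k => a k - a' k with hbdef
  by_contra hcon
  push_neg at hcon
  obtain ⟨k0, hk0⟩ := hcon
  have hbk0 : b k0 ≠ 0 := sub_ne_zero_of_ne hk0
  -- the power series identity for b
  have hb : PowerSeries.mk b * (1 - PowerSeries.X ^ q) ^ (N + 1)
      = ((p - p' : Polynomial ℂ) : PowerSeries ℂ) := by
    have hmk : PowerSeries.mk b = PowerSeries.mk a - PowerSeries.mk a' := by
      ext k; simp [hbdef]
    rw [hmk, sub_mul, hF, hF', Polynomial.coe_sub]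
  have hd : (p - p').degree < ((q * (N + 1) : ℕ) : WithBot ℕ) :=
    lt_of_le_of_lt (Polynomial.degree_sub_le p p') (max_lt hdeg hdeg')
  -- the recurrence
  have hrec : ∀ n, q * (N + 1) ≤ n →
      ∑ m ∈ Finset.range (N + 2),
        ((-1 : ℂ) ^ (m + (N + 1)) * ((N + 1).choose m)) * b (n - q * (N + 1 - m)) = 0 := by
    intro n hn
    have hc0 : PowerSeries.coeff n
        (PowerSeries.mk b * (1 - PowerSeries.X ^ q) ^ (N + 1)) = 0 := by
      rw [hb, Polynomial.coeff_coe]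
      apply Polynomial.coeff_eq_zero_of_degree_lt
      exact lt_of_lt_of_le hd (by exact_mod_cast hn)
    rw [sub_pow, Finset.mul_sum, map_sum] at hc0
    rw [← hc0]
    apply Finset.sum_congr rfl
    intro m hm
    rw [Finset.mem_range] at hm
    have hle : q * (N + 1 - m) ≤ n := le_trans (Nat.mul_le_mul_left q (by omega)) hn
    have hconst : ((-1 : PowerSeries ℂ) ^ (m + (N + 1)) * (((N + 1).choose m : ℕ) : PowerSeries ℂ))
        = PowerSeries.C ((-1) ^ (m + (N + 1)) * (((N + 1).choose m : ℕ) : ℂ)) := by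
      rw [map_mul, map_pow, map_neg, map_one, map_natCast]
    have hterm : (PowerSeries.mk b * ((-1) ^ (m + (N + 1)) * (1 : PowerSeries ℂ) ^ m
          * (PowerSeries.X ^ q) ^ (N + 1 - m) * (((N + 1).choose m : ℕ) : PowerSeries ℂ)))
        = PowerSeries.C ((-1) ^ (m + (N + 1)) * (((N + 1).choose m : ℕ) : ℂ))
          * (PowerSeries.mk b * PowerSeries.X ^ (q * (N + 1 - m))) := by
      rw [← hconst, ← pow_mul, one_pow]
      ring
    rw [hterm, PowerSeries.coeff_C_mul, PowerSeries.coeff_mul_X_pow', if_pos hle,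
      PowerSeries.coeff_mk]
  -- residue class
  set r : ℕ := k0 % q with hrdef
  set m0 : ℕ := k0 / q with hm0def
  set c : ℕ → ℂ := fun m => b (r + q * m) with hcdef
  have hcm0 : c m0 ≠ 0 := by
    have hk : r + q * m0 = k0 := by rw [hrdef, hm0def]; exact Nat.mod_add_div k0 q
    rw [hcdef]
    simpa [hk] using hbk0
  -- fwdDiff vanishes
  have hdiffc : (fwdDiff (1:ℕ))^[N+1] c = 0 := by
    funext y
    rw [fwdDiff_iter_eq_sum_shift]
    have hn : q * (N + 1) ≤ r + q * (y + (N + 1)) := by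
      have := Nat.mul_le_mul_left (k := q) (show N + 1 ≤ y + (N + 1) by omega)
      omega
    have h0 := hrec (r + q * (y + (N + 1))) hn
    rw [Pi.zero_apply, ← h0]
    apply Finset.sum_congr rfl
    intro k hk
    rw [Finset.mem_range] at hk
    have hsign : (-1 : ℂ) ^ (k + (N + 1)) = (-1) ^ (N + 1 - k) := by
      have he : k + (N + 1) = (N + 1 - k) + 2 * k := by omega
      rw [he, pow_add, pow_mul]
      norm_num
    have hidx : r + q * (y + (N + 1)) - q * (N + 1 - k) = r + q * (y + k) := by
      have h2 : q * (y + (N + 1)) = q * (y + k) + q * (N + 1 - k) := by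
        rw [← Nat.mul_add]; congr 1; omega
      omega
    rw [hidx, zsmul_eq_mul]
    push_cast
    rw [hsign]
    simp only [smul_eq_mul, mul_one, hcdef]
  -- eventually nonzero on the residue class
  obtain ⟨Mc, hMc⟩ := eventually_ne_of_fwdDiff N c m0 hcm0 hdiffc
  -- density contradiction
  exact density_contra q hq a a' r Mc
    (fun m hm => sub_ne_zero.mp (hMc m hm)) hdens
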